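/- Spearman's rho of the bound copula with parameter θ ∈ [-1,1] equals θ(θ²+1)/2, i.e., 12·∫₀¹∫₀¹ [(1-θ²)uv + (θ/4)((1+θ)² min(u,v) - (1-θ)² max(u+v-1,0))] du dv - 3 = θ(θ²+1)/2. -/

import Mathlib

/-- The bound copula. -/
noncomputable def boundCopula (θ u v : ℝ) : ℝ :=
  (1 - θ^2) * u * v +
    (θ / 4) * ((1 + θ)^2 * min u v - (1 - θ)^2 * max (u + v - 1) 0)

lemma intMin (u : ℝ) (hu0 : 0 ≤ u) (hu1 : u ≤ 1) :
    ∫ v in (0:ℝ)..1, min u v = u - u^2/2 := by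
  have hi1 : IntervalIntegrable (fun v => min u v) MeasureTheory.volume 0 u :=
    ((continuous_const.min continuous_id).intervalIntegrable _ _)
  have hi2 : IntervalIntegrable (fun v => min u v) MeasureTheory.volume u 1 :=
    ((continuous_const.min continuous_id).intervalIntegrable _ _)
  rw [← intervalIntegral.integral_add_adjacent_intervals hi1 hi2]
  have h1 : (∫ v in (0:ℝ)..u, min u v) = ∫ v in (0:ℝ)..u, v := by
    apply intervalIntegral.integral_congr
    intro v hv
    rw [Set.uIcc_of_le hu0] at hv
    exact min_eq_right hv.2
  have h2 : (∫ v in u..(1:ℝ), min u v) = ∫ v in u..(1:ℝ), u := by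
    apply intervalIntegral.integral_congr
    intro v hv
    rw [Set.uIcc_of_le hu1] at hv
    exact min_eq_left hv.1
  rw [h1, h2, integral_id, intervalIntegral.integral_const]
  simp only [smul_eq_mul]
  ring

lemma intMax (u : ℝ) (hu0 : 0 ≤ u) (hu1 : u ≤ 1) :
    ∫ v in (0:ℝ)..1, max (u + v - 1) 0 = u^2/2 := by
  have hc : Continuous (fun v : ℝ => max (u + v - 1) 0) :=
    ((continuous_const.add continuous_id).sub continuous_const).max continuous_const
  have hi1 : IntervalIntegrable (fun v : ℝ => max (u + v - 1) 0) MeasureTheory.volume 0 (1 - u) :=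
    hc.intervalIntegrable _ _
  have hi2 : IntervalIntegrable (fun v : ℝ => max (u + v - 1) 0) MeasureTheory.volume (1 - u) 1 :=
    hc.intervalIntegrable _ _
  rw [← intervalIntegral.integral_add_adjacent_intervals hi1 hi2]
  have h1 : (∫ v in (0:ℝ)..(1 - u), max (u + v - 1) 0) = ∫ v in (0:ℝ)..(1 - u), (0:ℝ) := by
    apply intervalIntegral.integral_congr
    intro v hv
    rw [Set.uIcc_of_le (by linarith)] at hv
    exact max_eq_right (by linarith [hv.2])
  have h2 : (∫ v in (1 - u)..(1:ℝ), max (u + v - 1) 0)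
      = ∫ v in (1 - u)..(1:ℝ), (v + (u - 1)) := by
    apply intervalIntegral.integral_congr
    intro v hv
    rw [Set.uIcc_of_le (by linarith)] at hv
    have h := hv.1
    show (u + v - 1) ⊔ 0 = v + (u - 1)
    rw [max_eq_left (by linarith)]
    ring
  rw [h1, h2]
  rw [intervalIntegral.integral_add (continuous_id'.intervalIntegrable _ _)
    (continuous_const.intervalIntegrable _ _)]
  rw [integral_id, intervalIntegral.integral_const,
    intervalIntegral.integral_const]
  simp only [smul_eq_mul]
  ring

lemma inner_int (θ u : ℝ) (hu0 : 0 ≤ u) (hu1 : u ≤ 1) :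
    (∫ v in (0:ℝ)..1, boundCopula θ u v)
      = (1 - θ^2) * u / 2 + (θ / 4) * ((1 + θ)^2 * (u - u^2/2) - (1 - θ)^2 * (u^2/2)) := by
  have hcmin : Continuous (fun v : ℝ => min u v) := continuous_const.min continuous_id
  have hcmax : Continuous (fun v : ℝ => max (u + v - 1) 0) :=
    ((continuous_const.add continuous_id).sub continuous_const).max continuous_const
  have h1 : IntervalIntegrable (fun v : ℝ => (1 - θ^2) * u * v) MeasureTheory.volume 0 1 :=
    (continuous_const.mul continuous_id').intervalIntegrable _ _
  have h2 : IntervalIntegrable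
      (fun v : ℝ => (θ / 4) * ((1 + θ)^2 * min u v - (1 - θ)^2 * max (u + v - 1) 0))
      MeasureTheory.volume 0 1 :=
    (continuous_const.mul
      ((continuous_const.mul hcmin).sub (continuous_const.mul hcmax))).intervalIntegrable _ _
  simp only [boundCopula]
  rw [intervalIntegral.integral_add h1 h2,
    intervalIntegral.integral_const_mul, intervalIntegral.integral_const_mul,
    intervalIntegral.integral_sub
      ((show Continuous (fun v : ℝ => (1 + θ)^2 * min u v) from
        continuous_const.mul hcmin).intervalIntegrable _ _)
      ((show Continuous (fun v : ℝ => (1 - θ)^2 * max (u + v - 1) 0) from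
        continuous_const.mul hcmax).intervalIntegrable _ _),
    intervalIntegral.integral_const_mul, intervalIntegral.integral_const_mul,
    integral_id, intMin u hu0 hu1, intMax u hu0 hu1]
  ring

theorem boundCopula_spearman_rho (θ : ℝ) (hθ : θ ∈ Set.Icc (-1:ℝ) 1) :
    12 * (∫ u in (0:ℝ)..1, ∫ v in (0:ℝ)..1, boundCopula θ u v) - 3
      = θ * (θ^2 + 1) / 2 := by
  have h : (∫ u in (0:ℝ)..1, ∫ v in (0:ℝ)..1, boundCopula θ u v)
      = ∫ u in (0:ℝ)..1,
          ((1 - θ^2) * u / 2 + (θ / 4) * ((1 + θ)^2 * (u - u^2/2) - (1 - θ)^2 * (u^2/2))) := by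
    apply intervalIntegral.integral_congr
    intro u hu
    rw [Set.uIcc_of_le (by norm_num : (0:ℝ) ≤ 1)] at hu
    exact inner_int θ u hu.1 hu.2
  rw [h]
  have e : ∀ u : ℝ, (1 - θ^2) * u / 2 + (θ / 4) * ((1 + θ)^2 * (u - u^2/2) - (1 - θ)^2 * (u^2/2))
      = ((1 - θ^2) / 2 + (θ / 4) * (1 + θ)^2) * u
        + (-(θ / 4) * (1 + θ)^2 / 2 - (θ / 4) * (1 - θ)^2 / 2) * u^2 := by
    intro u; ring
  simp only [e]
  rw [intervalIntegral.integral_add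
      ((show Continuous (fun u : ℝ => ((1 - θ^2) / 2 + (θ / 4) * (1 + θ)^2) * u) from
        continuous_const.mul continuous_id').intervalIntegrable _ _)
      ((show Continuous (fun u : ℝ =>
          (-(θ / 4) * (1 + θ)^2 / 2 - (θ / 4) * (1 - θ)^2 / 2) * u^2) from
        continuous_const.mul (continuous_pow 2)).intervalIntegrable _ _),
    intervalIntegral.integral_const_mul, intervalIntegral.integral_const_mul,
    integral_id, integral_pow]
  norm_num
  ring
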